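/- If X is a weird space, then there exists a point x ∈ X whose connected component in X is not a singleton; consequently this component is weird and connected. -/

import Mathlib

/-- A space is scattered iff every nonempty subset has a point isolated in it. -/
def ScatteredSpace (X : Type*) [TopologicalSpace X] : Prop :=
  ∀ S : Set X, S.Nonempty → ∃ x ∈ S, ∃ U : Set X, IsOpen U ∧ U ∩ S = {x}

/-- A space is weird iff it is compact Hausdorff, not scattered, and no subset
is simultaneously perfect (closed, nonempty, no isolated points) and totally
disconnected. -/
def Weird (X : Type*) [TopologicalSpace X] : Prop :=
  CompactSpace X ∧ T2Space X ∧ ¬ ScatteredSpace X ∧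
    ∀ P : Set X, Perfect P → P.Nonempty → ¬ IsTotallyDisconnected P

theorem stmt2 (X : Type*) [TopologicalSpace X] (hX : Weird X) :
    ∃ x : X, connectedComponent x ≠ {x} ∧
      Weird (connectedComponent x) ∧ IsConnected (connectedComponent x) := by
  obtain ⟨hc, ht, hs, hp⟩ := hX
  -- Step 1: some component is not a singleton
  have hstep1 : ∃ x : X, connectedComponent x ≠ {x} := by
    by_contra h
    push_neg at h
    have htd : TotallyDisconnectedSpace X :=
      totallyDisconnectedSpace_iff_connectedComponent_singleton.mpr h
    -- from not scattered, get a preperfect nonempty set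
    rw [ScatteredSpace] at hs
    push_neg at hs
    obtain ⟨S, hSne, hS⟩ := hs
    have hpre : Preperfect S := by
      intro x hx
      rw [accPt_iff_nhds]
      intro U hU
      obtain ⟨V, hVU, hVo, hxV⟩ := mem_nhds_iff.mp hU
      have := hS x hx V hVo
      have hxVS : x ∈ V ∩ S := ⟨hxV, hx⟩
      by_contra hcon
      push_neg at hcon
      apply hS x hx V hVo
      apply Set.Subset.antisymm
      · intro y hy
        exact hcon y ⟨hVU hy.1, hy.2⟩
      · intro y hy
        rw [Set.mem_singleton_iff] at hy
        exact hy ▸ hxVS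
    have hperf : Perfect (closure S) := preperfect_iff_perfect_closure.mp hpre
    exact hp (closure S) hperf (hSne.closure)
      (isTotallyDisconnected_of_totallyDisconnectedSpace _)
  obtain ⟨x, hx⟩ := hstep1
  refine ⟨x, hx, ?_, isConnected_connectedComponent⟩
  set C : Set X := connectedComponent x with hC
  have hCclosed : IsClosed C := isClosed_connectedComponent
  have hCconn : IsConnected C := isConnected_connectedComponent
  have hxC : x ∈ C := mem_connectedComponent
  -- compactness
  have hCcomp : CompactSpace C := isCompact_iff_compactSpace.mp (hCclosed.isCompact)
  have hCt2 : T2Space C := inferInstance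
  have hCpre : PreconnectedSpace C := Subtype.preconnectedSpace hCconn.isPreconnected
  refine ⟨hCcomp, hCt2, ?_, ?_⟩
  · -- not scattered
    intro hsc
    obtain ⟨y, -, U, hUo, hU⟩ := hsc Set.univ ⟨⟨x, hxC⟩, trivial⟩
    rw [Set.inter_univ] at hU
    subst hU
    have hyopen : IsOpen ({y} : Set C) := hUo
    have hyclosed : IsClosed ({y} : Set C) := isClosed_singleton
    have : ({y} : Set C) = Set.univ :=
      (isClopen_iff.mp ⟨hyclosed, hyopen⟩).resolve_left (Set.singleton_nonempty y).ne_empty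
    apply hx
    have hCy : C = {(y : X)} := by
      rw [Set.eq_singleton_iff_unique_mem]
      refine ⟨y.2, fun z hz => ?_⟩
      have h1 : (⟨z, hz⟩ : C) ∈ ({y} : Set C) := by rw [this]; trivial
      exact congrArg Subtype.val h1
    have hxy : x = (y : X) := by
      have h2 := hxC
      rw [hCy, Set.mem_singleton_iff] at h2
      exact h2
    show C = {x}
    rw [hCy, hxy]
  · -- perfect subsets not totally disconnected
    intro P hP hPne hPtd
    apply hp (Subtype.val '' P)
    · constructor
      · exact (hCclosed.isClosedEmbedding_subtypeVal.isClosedMap _ hP.closed)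
      · rintro z ⟨y, hyP, rfl⟩
        rw [accPt_iff_nhds]
        intro U hU
        have hU' : (Subtype.val ⁻¹' U : Set C) ∈ nhds y :=
          (continuous_subtype_val.continuousAt).preimage_mem_nhds hU
        obtain ⟨w, ⟨hwU, hwP⟩, hwy⟩ := accPt_iff_nhds.mp (hP.acc y hyP) _ hU'
        exact ⟨w, ⟨hwU, ⟨w, hwP, rfl⟩⟩, fun h => hwy (Subtype.val_injective h)⟩
    · exact hPne.image _
    · intro s hsub hsconn
      have hsub' : s ⊆ Set.range (Subtype.val : C → X) :=
        hsub.trans (Set.image_subset_range _ _)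
      obtain ⟨t, rfl⟩ : ∃ t : Set C, Subtype.val '' t = s := by
        refine ⟨Subtype.val ⁻¹' s, ?_⟩
        rw [Set.image_preimage_eq_inter_range, Set.inter_eq_left.mpr hsub']
      have ht : IsPreconnected t :=
        Topology.IsInducing.subtypeVal.isPreconnected_image.mp hsconn
      have htsub : t ⊆ P := by
        intro a ha
        obtain ⟨b, hb, heq⟩ := hsub ⟨a, ha, rfl⟩
        rwa [Subtype.val_injective heq] at hb
      exact (hPtd t htsub ht).image _
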